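/- In an affine plane of order q, let 𝓛 be a Kakeya line set and suppose P is a point lying on exactly q+1-k lines of 𝓛. Then the number of points not covered by any line of 𝓛 is at most kq - k(k+1)/2. -/

import Mathlib

/-- An affine plane of order `q`: `q²` points, every line has `q` points, the lines fall
into `q+1` parallel classes each of which partitions the point set (every point lies on a
unique line of each class), and two non-parallel lines meet in exactly one point. -/
structure AffinePlaneOrder (q : ℕ) where
  Point : Type
  Line : Type
  mem : Point → Line → Prop
  pointCount : Nat.card Point = q ^ 2
  lineSize : ∀ l : Line, {p : Point | mem p l}.ncard = q
  parClass : Line → Fin (q + 1)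
  point_class : ∀ (p : Point) (c : Fin (q + 1)), ∃! l : Line, parClass l = c ∧ mem p l
  meet : ∀ l m : Line, parClass l ≠ parClass m → ∃! p : Point, mem p l ∧ mem p m

/-- A Kakeya line set: one line from each parallel class. -/
def IsKakeyaLines {q : ℕ} (A : AffinePlaneOrder q) (L : Fin (q + 1) → A.Line) : Prop :=
  ∀ c, A.parClass (L c) = c

/-- The Kakeya set determined by the lines `L`: all points covered by some line of `L`. -/
def kakeyaSet {q : ℕ} (A : AffinePlaneOrder q) (L : Fin (q + 1) → A.Line) : Set A.Point :=
  {p | ∃ c, A.mem p (L c)}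

/-- The number of lines of `L` through `p`; `p` is a `j`-knot when this equals `j`. -/
noncomputable def knotCount {q : ℕ} (A : AffinePlaneOrder q) (L : Fin (q + 1) → A.Line) (p : A.Point) : ℕ :=
  {c : Fin (q + 1) | A.mem p (L c)}.ncard

/-- If some point is a `(q+1-k)`-knot of a Kakeya line set, then at most `kq - k(k+1)/2`
points are not covered by any line of the set. -/
theorem uncovered_upper_bound {q : ℕ} (A : AffinePlaneOrder q) (L : Fin (q + 1) → A.Line)
    (hL : IsKakeyaLines A L) (k : ℕ) (hk : k ≤ q) (P : A.Point)
    (hP : knotCount A L P = q + 1 - k) :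
    {p : A.Point | ∀ c, ¬ A.mem p (L c)}.ncard ≤ k * q - k * (k + 1) / 2 := by
  classical
  rcases Nat.eq_zero_or_pos q with hq | hq
  · -- degenerate case q = 0
    subst hq
    have hk0 : k = 0 := Nat.le_zero.mp hk
    subst hk0
    have hz : {p : A.Point | ∀ c, ¬ A.mem p (L c)}.ncard = 0 := by
      set U : Set A.Point := {p | ∀ c, ¬ A.mem p (L c)} with hU
      rcases U.finite_or_infinite with hf | hinf
      · rcases U.eq_empty_or_nonempty with he | ⟨p, hp⟩
        · simp [he]
        · exfalso
          obtain ⟨l, ⟨hcl, hml⟩, hu⟩ := A.point_class p 0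
          have hsub : {x | A.mem x l} ⊆ U := by
            intro x hx c hxc
            have hc0 : c = 0 := Fin.fin_one_eq_zero c
            subst hc0
            obtain ⟨m, hm, hum⟩ := A.point_class x 0
            have h1 : l = m := hum l ⟨hcl, hx⟩
            have h2 : L 0 = m := hum (L 0) ⟨hL 0, hxc⟩
            have h3 : l = L 0 := h1.trans h2.symm
            exact hp 0 (h3 ▸ hml)
          have hfin' : {x : A.Point | A.mem x l}.Finite := hf.subset hsub
          have hpos := (Set.ncard_pos hfin').mpr ⟨p, hml⟩
          rw [A.lineSize l] at hpos
          exact absurd hpos (lt_irrefl 0)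
      · simp [hinf.ncard]
    simpa using hz
  -- main case q ≥ 1
  have hfinP : Finite A.Point := Nat.finite_of_card_ne_zero (by rw [A.pointCount]; positivity)
  cases nonempty_fintype A.Point
  -- the line through p in class c
  have key : ∀ (p : A.Point) (c : Fin (q+1)), ∃ l : A.Line,
      (A.parClass l = c ∧ A.mem p l) ∧ ∀ m, A.parClass m = c → A.mem p m → m = l := by
    intro p c
    obtain ⟨l, hl, hu⟩ := A.point_class p c
    exact ⟨l, hl, fun m h1 h2 => hu m ⟨h1, h2⟩⟩
  choose thru hcm huniq using key
  have hcls : ∀ p c, A.parClass (thru p c) = c := fun p c => (hcm p c).1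
  have hmem : ∀ p c, A.mem p (thru p c) := fun p c => (hcm p c).2
  set M : Fin (q+1) → A.Line := fun c => thru P c with hM
  -- finset of points on a line
  set pts : A.Line → Finset A.Point := fun l => Finset.univ.filter (fun p => A.mem p l) with hpts
  have hptscard : ∀ l, (pts l).card = q := by
    intro l
    have h1 : ({p : A.Point | A.mem p l} : Set A.Point) = ↑(pts l) := by
      ext x; simp [hpts]
    have h2 := A.lineSize l
    rw [h1, Set.ncard_coe_finset] at h2
    exact h2
  -- two distinct lines through P meet only at P
  have hmeetP : ∀ c c' : Fin (q+1), c ≠ c' → ∀ x, A.mem x (M c) → A.mem x (M c') → x = P := by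
    intro c c' hne x h1 h2
    obtain ⟨z, hz, hu⟩ := A.meet (M c) (M c') (by rw [hcls, hcls]; exact hne)
    rw [hu x ⟨h1, h2⟩, hu P ⟨hmem P c, hmem P c'⟩]
  -- the lines through P cover everything
  have hcover : ∀ x : A.Point, ∃ c, A.mem x (M c) := by
    intro x
    set W : Finset A.Point :=
      insert P (Finset.univ.biUnion (fun c : Fin (q+1) => (pts (M c)).erase P)) with hW
    have hdisj : ∀ c ∈ (Finset.univ : Finset (Fin (q+1))), ∀ c' ∈ Finset.univ, c ≠ c' →
        Disjoint ((pts (M c)).erase P) ((pts (M c')).erase P) := by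
      intro c _ c' _ hne
      rw [Finset.disjoint_left]
      intro a ha ha'
      have h1 := Finset.mem_of_mem_erase ha
      have h2 := Finset.mem_of_mem_erase ha'
      simp only [hpts, Finset.mem_filter] at h1 h2
      exact (Finset.ne_of_mem_erase ha) (hmeetP c c' hne a h1.2 h2.2)
    have herase : ∀ c : Fin (q+1), ((pts (M c)).erase P).card = q - 1 := by
      intro c
      rw [Finset.card_erase_of_mem (by simp [hpts, hM, hmem P c]), hptscard]
    have hPnot : P ∉ Finset.univ.biUnion (fun c : Fin (q+1) => (pts (M c)).erase P) := by
      simp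
    have hcard : W.card = q ^ 2 := by
      rw [hW, Finset.card_insert_of_notMem hPnot, Finset.card_biUnion hdisj]
      simp only [herase, Finset.sum_const, Finset.card_univ, Fintype.card_fin, smul_eq_mul]
      obtain ⟨q', rfl⟩ : ∃ q', q = q' + 1 := ⟨q - 1, by omega⟩
      have : q' + 1 - 1 = q' := by omega
      rw [this]
      ring
    have hWuniv : W = Finset.univ := by
      apply Finset.eq_univ_of_card
      rw [hcard, ← Nat.card_eq_fintype_card, A.pointCount]
    have hxW : x ∈ W := hWuniv ▸ Finset.mem_univ x
    rw [hW, Finset.mem_insert] at hxW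
    rcases hxW with rfl | hx
    · exact ⟨0, hmem x 0⟩
    · obtain ⟨c, _, hc⟩ := Finset.mem_biUnion.mp hx
      have := Finset.mem_of_mem_erase hc
      simp only [hpts, Finset.mem_filter] at this
      exact ⟨c, this.2⟩
  -- uniqueness of the covering class away from P
  have hcovuniq : ∀ x : A.Point, x ≠ P → ∀ c c', A.mem x (M c) → A.mem x (M c') → c = c' := by
    intro x hxP c c' h1 h2
    by_contra hne
    exact hxP (hmeetP c c' hne x h1 h2)
  -- the set S of classes whose 𝓛-line misses P
  set S : Finset (Fin (q+1)) := Finset.univ.filter (fun c => ¬ A.mem P (L c)) with hS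
  have hScard : S.card = k := by
    have h1 : ({c : Fin (q+1) | A.mem P (L c)} : Set (Fin (q+1)))
        = ↑(Finset.univ.filter (fun c => A.mem P (L c))) := by ext c; simp
    have h2 := hP
    unfold knotCount at h2
    rw [h1, Set.ncard_coe_finset] at h2
    have h3 := Finset.card_filter_add_card_filter_not
      (s := (Finset.univ : Finset (Fin (q+1)))) (p := fun c => A.mem P (L c))
    simp only [Finset.card_univ, Fintype.card_fin] at h3
    simp only [hS]
    omega
  have hSmem : ∀ d, d ∈ S ↔ ¬ A.mem P (L d) := by
    intro d; simp [hS]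
  -- P is covered
  have hPcov : ∃ d, A.mem P (L d) := by
    by_contra h
    push_neg at h
    have hSu : S = Finset.univ := by
      ext c; simp [hS, h c]
    rw [hSu, Finset.card_univ, Fintype.card_fin] at hScard
    omega
  -- intersection points of M c with L d
  have hmeetex : ∀ c d : Fin (q+1), ∃ p : A.Point, c ≠ d → A.mem p (M c) ∧ A.mem p (L d) := by
    intro c d
    by_cases h : c = d
    · exact ⟨P, fun h' => absurd h h'⟩
    · obtain ⟨p, hp, -⟩ := A.meet (M c) (L d) (by rw [hcls, hL]; exact h)
      exact ⟨p, fun _ => hp⟩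
  choose X hX using hmeetex
  have hXM : ∀ c d, c ≠ d → A.mem (X c d) (M c) := fun c d h => (hX c d h).1
  have hXL : ∀ c d, c ≠ d → A.mem (X c d) (L d) := fun c d h => (hX c d h).2
  -- unique intersection of two non-parallel 𝓛-lines
  have hLuniq : ∀ d d' : Fin (q+1), d ≠ d' → ∀ y z : A.Point,
      A.mem y (L d) → A.mem y (L d') → A.mem z (L d) → A.mem z (L d') → y = z := by
    intro d d' hne y z h1 h2 h3 h4
    obtain ⟨w, -, hu⟩ := A.meet (L d) (L d') (by rw [hL, hL]; exact hne)
    rw [hu y ⟨h1, h2⟩, hu z ⟨h3, h4⟩]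
  -- classes of S-lines through a point
  set Dy : A.Point → Finset (Fin (q+1)) := fun y => S.filter (fun d => A.mem y (L d)) with hDy
  set B : Finset A.Point := S.offDiag.image (fun cd => X cd.1 cd.2) with hB
  have hBfact : ∀ y ∈ B, ∃ d, ¬ A.mem P (L d) ∧ A.mem y (L d) := by
    intro y hy
    rw [hB] at hy
    obtain ⟨cd, hcd, rfl⟩ := Finset.mem_image.mp hy
    obtain ⟨hc, hd, hne⟩ := Finset.mem_offDiag.mp hcd
    exact ⟨cd.2, (hSmem cd.2).mp hd, hXL _ _ hne⟩
  have hBneP : ∀ y ∈ B, y ≠ P := by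
    intro y hy h
    obtain ⟨d, hd1, hd2⟩ := hBfact y hy
    exact hd1 (h ▸ hd2)
  -- d0 function: minimal class of an S-line through the point
  set f0 : Fin (q+1) × Fin (q+1) → Fin (q+1) := fun cd => WithTop.untopD 0 ((Dy (X cd.1 cd.2)).min) with hf0
  have hDy2 : ∀ cd ∈ S.offDiag, cd.2 ∈ Dy (X cd.1 cd.2) := by
    intro cd hcd
    obtain ⟨hc, hd, hne⟩ := Finset.mem_offDiag.mp hcd
    simp only [hDy, Finset.mem_filter]
    exact ⟨hd, hXL _ _ hne⟩
  have hmin_eq : ∀ cd ∈ S.offDiag, (Dy (X cd.1 cd.2)).min = (f0 cd : WithTop (Fin (q+1))) := by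
    intro cd hcd
    obtain ⟨a, ha⟩ := Finset.min_of_mem (hDy2 cd hcd)
    rw [hf0]
    simp [ha]
  have hf0mem : ∀ cd ∈ S.offDiag, f0 cd ∈ Dy (X cd.1 cd.2) := by
    intro cd hcd
    exact Finset.mem_of_min (hmin_eq cd hcd)
  -- split the ordered pairs
  set A1 : Finset (Fin (q+1) × Fin (q+1)) :=
    S.offDiag.filter (fun cd => (Dy (X cd.1 cd.2)).min = (cd.2 : WithTop (Fin (q+1)))) with hA1
  set A2 : Finset (Fin (q+1) × Fin (q+1)) :=
    S.offDiag.filter (fun cd => ¬ ((Dy (X cd.1 cd.2)).min = (cd.2 : WithTop (Fin (q+1))))) with hA2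
  have hsplit : A1.card + A2.card = S.offDiag.card :=
    Finset.card_filter_add_card_filter_not _
  have hA1card : A1.card ≤ B.card := by
    apply Finset.card_le_card_of_injOn (fun cd => X cd.1 cd.2)
    · intro cd hcd
      exact hB ▸ Finset.mem_image_of_mem _ (Finset.mem_of_mem_filter cd hcd)
    · intro cd hcd cd' hcd' heqq
      have heq : X cd.1 cd.2 = X cd'.1 cd'.2 := heqq
      simp only [hA1, Finset.coe_filter, Set.mem_setOf_eq] at hcd hcd'
      obtain ⟨hcdo, hmin1⟩ := hcd
      obtain ⟨hcdo', hmin1'⟩ := hcd'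
      obtain ⟨hc1, hd1, hne1⟩ := Finset.mem_offDiag.mp hcdo
      obtain ⟨hc1', hd1', hne1'⟩ := Finset.mem_offDiag.mp hcdo'
      have hyP : X cd.1 cd.2 ≠ P := by
        intro h
        exact ((hSmem cd.2).mp hd1) (h ▸ hXL cd.1 cd.2 hne1)
      have hc : cd.1 = cd'.1 :=
        hcovuniq _ hyP _ _ (hXM cd.1 cd.2 hne1) (heq ▸ hXM cd'.1 cd'.2 hne1')
      have hd : cd.2 = cd'.2 := by
        have h1 := hmin1
        rw [heq, hmin1'] at h1
        exact_mod_cast h1.symm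
      exact Prod.ext hc hd
  have hA2card : A2.card ≤ Nat.choose k 2 := by
    have hle : A2.card ≤ (S.powersetCard 2).card := by
      apply Finset.card_le_card_of_injOn (fun cd => ({f0 cd, cd.2} : Finset (Fin (q+1))))
      · intro cd hcd
        simp only [hA2, Finset.mem_coe, Finset.mem_filter] at hcd
        obtain ⟨hcdo, hne⟩ := hcd
        have h1 := hf0mem cd hcdo
        have h2 := hDy2 cd hcdo
        simp only [hDy, Finset.mem_filter] at h1 h2
        have hne2 : f0 cd ≠ cd.2 := fun h => hne (by rw [hmin_eq cd hcdo, h])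
        rw [Finset.mem_coe, Finset.mem_powersetCard]
        constructor
        · intro a ha
          rcases Finset.mem_insert.mp ha with rfl | ha'
          · exact h1.1
          · rw [Finset.mem_singleton.mp ha']; exact h2.1
        · rw [Finset.card_insert_of_notMem (by simp [hne2]), Finset.card_singleton]
      · intro cd hcd cd' hcd' heqq
        have heq : ({f0 cd, cd.2} : Finset (Fin (q+1))) = {f0 cd', cd'.2} := heqq
        simp only [hA2, Finset.coe_filter, Set.mem_setOf_eq] at hcd hcd'
        obtain ⟨hcdo, hneq⟩ := hcd
        obtain ⟨hcdo', hneq'⟩ := hcd'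
        obtain ⟨hc1, hd1, hne1⟩ := Finset.mem_offDiag.mp hcdo
        obtain ⟨hc1', hd1', hne1'⟩ := Finset.mem_offDiag.mp hcdo'
        have hmemf0 := hf0mem cd hcdo
        have hmemf0' := hf0mem cd' hcdo'
        simp only [hDy, Finset.mem_filter] at hmemf0 hmemf0'
        have hfd : f0 cd ≠ cd.2 := fun h => hneq (by rw [hmin_eq cd hcdo, h])
        have hfd' : f0 cd' ≠ cd'.2 := fun h => hneq' (by rw [hmin_eq cd' hcdo', h])
        -- elements of the pair
        have hsub : ∀ a ∈ ({f0 cd', cd'.2} : Finset (Fin (q+1))), A.mem (X cd'.1 cd'.2) (L a) := by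
          intro a ha
          rcases Finset.mem_insert.mp ha with rfl | ha'
          · exact hmemf0'.2
          · rw [Finset.mem_singleton.mp ha']; exact hXL _ _ hne1'
        have hymem : A.mem (X cd'.1 cd'.2) (L (f0 cd)) ∧ A.mem (X cd'.1 cd'.2) (L cd.2) := by
          constructor
          · exact hsub _ (heq ▸ Finset.mem_insert_self _ _)
          · exact hsub _ (heq ▸ Finset.mem_insert_of_mem (Finset.mem_singleton_self _))
        have hyy : X cd.1 cd.2 = X cd'.1 cd'.2 :=
          hLuniq (f0 cd) cd.2 hfd _ _ hmemf0.2 (hXL _ _ hne1) hymem.1 hymem.2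
        have hyP : X cd.1 cd.2 ≠ P := by
          intro h
          exact ((hSmem cd.2).mp hd1) (h ▸ hXL cd.1 cd.2 hne1)
        have hc : cd.1 = cd'.1 :=
          hcovuniq _ hyP _ _ (hXM cd.1 cd.2 hne1) (hyy ▸ hXM cd'.1 cd'.2 hne1')
        have hf0eq : f0 cd = f0 cd' := by
          rw [hf0]; simp only []
          rw [show (Dy (X cd.1 cd.2)) = (Dy (X cd'.1 cd'.2)) from hyy ▸ rfl]
        have hd : cd.2 = cd'.2 := by
          have h1 : cd.2 ∈ ({f0 cd', cd'.2} : Finset (Fin (q+1))) := by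
            rw [← heq]
            exact Finset.mem_insert_of_mem (Finset.mem_singleton_self _)
          rcases Finset.mem_insert.mp h1 with h2 | h2
          · exact absurd (h2.trans hf0eq.symm) (Ne.symm hfd)
          · exact Finset.mem_singleton.mp h2
        exact Prod.ext hc hd
    rw [Finset.card_powersetCard, hScard] at hle
    exact hle
  -- uncovered points
  set Unc : Finset A.Point := Finset.univ.filter (fun p => ∀ c, ¬ A.mem p (L c)) with hUnc
  -- per-line inequality
  have hline : ∀ c ∈ S, (Unc.filter (fun p => A.mem p (M c))).card
      + (B.filter (fun p => A.mem p (M c))).card + 1 ≤ q := by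
    intro c hc
    have hsub : insert P (Unc.filter (fun p => A.mem p (M c)) ∪ B.filter (fun p => A.mem p (M c)))
        ⊆ pts (M c) := by
      intro x hx
      simp only [hpts, Finset.mem_filter, Finset.mem_univ, true_and]
      rcases Finset.mem_insert.mp hx with rfl | hx'
      · exact hmem x c
      · rcases Finset.mem_union.mp hx' with h | h
        · exact (Finset.mem_filter.mp h).2
        · exact (Finset.mem_filter.mp h).2
    have hcard := Finset.card_le_card hsub
    rw [hptscard] at hcard
    have hPn : P ∉ Unc.filter (fun p => A.mem p (M c)) ∪ B.filter (fun p => A.mem p (M c)) := by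
      intro h
      rcases Finset.mem_union.mp h with h' | h'
      · have hPU := Finset.mem_filter.mp (Finset.mem_filter.mp h').1
        obtain ⟨d, hd⟩ := hPcov
        exact hPU.2 d hd
      · exact hBneP P (Finset.mem_filter.mp h').1 rfl
    have hdisj : Disjoint (Unc.filter (fun p => A.mem p (M c)))
        (B.filter (fun p => A.mem p (M c))) := by
      rw [Finset.disjoint_left]
      intro y hy hy'
      obtain ⟨d, _, hd2⟩ := hBfact y (Finset.mem_filter.mp hy').1
      have hyU := Finset.mem_filter.mp (Finset.mem_filter.mp hy).1
      exact hyU.2 d hd2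
    rw [Finset.card_insert_of_notMem hPn, Finset.card_union_of_disjoint hdisj] at hcard
    omega
  -- summing over S
  have hsum : ∑ c ∈ S, ((Unc.filter (fun p => A.mem p (M c))).card
      + (B.filter (fun p => A.mem p (M c))).card + 1) ≤ k * q := by
    calc ∑ c ∈ S, ((Unc.filter (fun p => A.mem p (M c))).card
        + (B.filter (fun p => A.mem p (M c))).card + 1)
        ≤ ∑ _c ∈ S, q := Finset.sum_le_sum hline
      _ = k * q := by rw [Finset.sum_const, hScard, smul_eq_mul]
  have hsum_eq : ∑ c ∈ S, ((Unc.filter (fun p => A.mem p (M c))).card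
      + (B.filter (fun p => A.mem p (M c))).card + 1)
      = (∑ c ∈ S, (Unc.filter (fun p => A.mem p (M c))).card)
        + (∑ c ∈ S, (B.filter (fun p => A.mem p (M c))).card) + k := by
    rw [Finset.sum_add_distrib, Finset.sum_add_distrib, Finset.sum_const, smul_eq_mul, mul_one,
      hScard]
  -- Unc is inside the union of the S-lines through P
  have hUncsub : Unc ⊆ S.biUnion (fun c => Unc.filter (fun p => A.mem p (M c))) := by
    intro x hx
    obtain ⟨c, hc⟩ := hcover x
    have hxU := Finset.mem_filter.mp hx
    have hcS : c ∈ S := by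
      rw [hSmem]
      intro hPL
      have hMLc : L c = M c := huniq P c (L c) (hL c) hPL
      exact hxU.2 c (hMLc ▸ hc)
    exact Finset.mem_biUnion.mpr ⟨c, hcS, Finset.mem_filter.mpr ⟨hx, hc⟩⟩
  have hUnclb : Unc.card ≤ ∑ c ∈ S, (Unc.filter (fun p => A.mem p (M c))).card :=
    le_trans (Finset.card_le_card hUncsub) Finset.card_biUnion_le
  -- B is inside the union of the S-lines through P
  have hBsub : B ⊆ S.biUnion (fun c => B.filter (fun p => A.mem p (M c))) := by
    intro y hy
    have hy' := hy
    rw [hB] at hy'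
    obtain ⟨cd, hcd, rfl⟩ := Finset.mem_image.mp hy'
    obtain ⟨hc, hd, hne⟩ := Finset.mem_offDiag.mp hcd
    exact Finset.mem_biUnion.mpr ⟨cd.1, hc, Finset.mem_filter.mpr ⟨hy, hXM _ _ hne⟩⟩
  have hBlb : B.card ≤ ∑ c ∈ S, (B.filter (fun p => A.mem p (M c))).card :=
    le_trans (Finset.card_le_card hBsub) Finset.card_biUnion_le
  -- main count
  have h1 : Unc.card + B.card + k ≤ k * q := by
    rw [hsum_eq] at hsum
    omega
  have hoffcard : S.offDiag.card = k * k - k := by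
    rw [Finset.offDiag_card, hScard]
  have h2 : k * k - k ≤ B.card + Nat.choose k 2 := by
    rw [← hoffcard, ← hsplit]
    omega
  -- arithmetic
  have hch : Nat.choose k 2 = k * (k - 1) / 2 := Nat.choose_two_right k
  have hdvd1 : 2 ∣ k * (k - 1) := by
    have h := (Nat.even_mul_succ_self (k - 1)).two_dvd
    rcases Nat.eq_zero_or_pos k with h0 | h0
    · simp [h0]
    · have hk1 : k - 1 + 1 = k := by omega
      rw [hk1] at h
      rwa [Nat.mul_comm]
  have hdvd2 : 2 ∣ k * (k + 1) := (Nat.even_mul_succ_self k).two_dvd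
  have hrel : k * (k + 1) = k * (k - 1) + 2 * k := by
    rcases k with _ | n
    · simp
    · simp only [Nat.succ_sub_one]
      ring
  have hkk : k * (k - 1) + k = k * k := by
    rcases k with _ | n
    · simp
    · simp only [Nat.succ_sub_one]
      ring
  -- convert the goal
  have hgoal : ({p : A.Point | ∀ c, ¬ A.mem p (L c)}).ncard = Unc.card := by
    rw [show ({p : A.Point | ∀ c, ¬ A.mem p (L c)}) = (↑Unc : Set A.Point) by
      ext x; simp [hUnc], Set.ncard_coe_finset]
  rw [hgoal]
  rw [hch] at h2
  omega
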